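/- Let k ≥ 3 be an odd integer and let D be a k-quasi-transitive digraph. If P = (u_0, u_1, …, u_{k+1}, u_{k+2}) is a directed path in D of minimum length from u_0 to u_{k+2}, i.e., d(u_0,u_{k+2}) = k+2, then d⁺(u_{k+1}) ≥ d⁺(u_0) + (k−1)/2. -/

import Mathlib

variable {V : Type*}

/-- A directed path of length `n` from `u` to `v` in the digraph with arc relation `A`:
a sequence of `n + 1` pairwise distinct vertices, consecutive ones joined by arcs. -/
def HasPathN (A : V → V → Prop) (u v : V) (n : ℕ) : Prop :=
  ∃ f : Fin (n + 1) → V, Function.Injective f ∧ f 0 = u ∧ f (Fin.last n) = v ∧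
    ∀ i : Fin n, A (f i.castSucc) (f i.succ)

/-- The distance from `u` to `v`: the length of a shortest directed path from `u` to `v`,
`⊤` if there is no such path. -/
noncomputable def ddist (A : V → V → Prop) (u v : V) : ℕ∞ :=
  sInf {n : ℕ∞ | ∃ m : ℕ, n = (m : ℕ∞) ∧ HasPathN A u v m}

/-- `D` is `k`-quasi-transitive if for every directed path `(v_0, …, v_k)` of length `k`,
either `(v_0, v_k)` or `(v_k, v_0)` is an arc. -/
def KQuasiTrans (A : V → V → Prop) (k : ℕ) : Prop :=
  ∀ u v : V, HasPathN A u v k → A u v ∨ A v u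

/-- A vertex `v` is an `r`-king if every vertex is within distance `r` from `v`. -/
def IsRKing (A : V → V → Prop) (r : ℕ) (v : V) : Prop :=
  ∀ u : V, ddist A v u ≤ (r : ℕ∞)

/-- `u` reaches `v` by a directed path. -/
def Reaches (A : V → V → Prop) (u v : V) : Prop :=
  ∃ n : ℕ, HasPathN A u v n

/-- A strong component: the set of all vertices mutually reachable with some vertex. -/
def IsStrongComponent (A : V → V → Prop) (S : Set V) : Prop :=
  ∃ v : V, S = {u | Reaches A u v ∧ Reaches A v u}

/-- An initial strong component: a strong component receiving no arcs from outside. -/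
def IsInitialStrongComponent (A : V → V → Prop) (S : Set V) : Prop :=
  IsStrongComponent A S ∧ ∀ u v : V, u ∉ S → v ∈ S → ¬ A u v

/-- The out-degree of `v` in `D`. -/
noncomputable def outDeg (A : V → V → Prop) (v : V) : ℕ :=
  {u : V | A v u}.ncard

/-- The out-degree of `v` in the subdigraph of `D` induced by `C`. -/
noncomputable def outDegIn (A : V → V → Prop) (C : Set V) (v : V) : ℕ :=
  {u ∈ C | A v u}.ncard

/-- The maximum out-degree of the subdigraph induced by `C`. -/
noncomputable def maxOutDegIn (A : V → V → Prop) (C : Set V) : ℕ :=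
  sSup (outDegIn A C '' C)

theorem hasPathN_of_fn {A : V → V → Prop} {n : ℕ} {u v : V} (p : ℕ → V)
    (h0 : p 0 = u) (hn : p n = v)
    (hpinj : ∀ i ≤ n, ∀ j ≤ n, p i = p j → i = j)
    (hparc : ∀ i < n, A (p i) (p (i+1))) :
    HasPathN A u v n := by
  refine ⟨fun i => p i.val, ?_, h0, hn, fun i => hparc i.val i.isLt⟩
  intro i j hij
  exact Fin.ext (hpinj i.val (by omega) j.val (by omega) hij)

theorem pathN_idx {A : V → V → Prop} (g : ℕ → V) (N : ℕ)
    (ginj : ∀ i ≤ N, ∀ j ≤ N, g i = g j → i = j)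
    {n : ℕ} (q : ℕ → ℕ) {a b : ℕ}
    (hq0 : q 0 = a) (hqn : q n = b)
    (hbd : ∀ i ≤ n, q i ≤ N)
    (hqinj : ∀ i ≤ n, ∀ j ≤ n, q i = q j → i = j)
    (harcq : ∀ i < n, A (g (q i)) (g (q (i+1)))) :
    HasPathN A (g a) (g b) n := by
  refine hasPathN_of_fn (fun i => g (q i)) (by (try dsimp only); rw [hq0]) (by (try dsimp only); rw [hqn]) ?_ harcq
  intro i hi j hj h
  exact hqinj i hi j hj (ginj _ (hbd i hi) _ (hbd j hj) h)

set_option maxHeartbeats 2000000 in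
theorem kqt_aux {V : Type*} (A : V → V → Prop) (hloop : ∀ v : V, ¬ A v v)
    (k c : ℕ) (hk : 3 ≤ k) (hc : k = 2*c+1) (hqt : KQuasiTrans A k)
    (g : ℕ → V)
    (ginj : ∀ i ≤ k+2, ∀ j ≤ k+2, g i = g j → i = j)
    (arc : ∀ i < k+2, A (g i) (g (i+1)))
    (hshort : ∀ m : ℕ, HasPathN A (g 0) (g (k+2)) m → k+2 ≤ m)
    (hfinS : {u : V | A (g 0) u}.Finite) (hfinT : {u : V | A (g (k+1)) u}.Finite) :
    {u : V | A (g 0) u}.ncard + c ≤ {u : V | A (g (k+1)) u}.ncard := by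
  have arc' : ∀ x y : ℕ, y = x + 1 → x < k + 2 → A (g x) (g y) := by
    intro x y h hx; rw [h]; exact arc x hx
  -- no shortcuts between path vertices
  have L1 : ∀ a b : ℕ, a + 2 ≤ b → b ≤ k+2 → ¬ A (g a) (g b) := by
    intro a b hab hb hA
    have hp := pathN_idx (A := A) g (k+2) ginj (fun i => if i ≤ a then i else i + (b-a-1))
      (a := 0) (b := k+2) (n := k+3+a-b)
      (by simp) (by (try dsimp only); rw [if_neg (by omega)]; omega) (fun i hi => by (try dsimp only); split_ifs <;> omega)
      ?_ ?_
    · have := hshort _ hp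
      omega
    · intro i hi j hj h
      (try dsimp only at h)
      split_ifs at h <;> omega
    · intro i hi
      (try dsimp only)
      split_ifs with h1 h2 h2
      · exact arc' _ _ (by omega) (by omega)
      · rw [show i = a from by omega]
        rw [show a + 1 + (b-a-1) = b from by omega]
        exact hA
      · exfalso; omega
      · exact arc' _ _ (by omega) (by omega)
  -- arcs from ends of length-k subpaths of P
  have f1 : ∀ a : ℕ, a ≤ 2 → A (g (a+k)) (g a) := by
    intro a ha
    have hp := pathN_idx (A := A) g (k+2) ginj (fun i => a + i) (a := a) (b := a+k) (n := k)
      rfl rfl (fun i hi => by (try dsimp only); omega) (fun i hi j hj h => by (try dsimp only at h); omega)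
      (fun i hi => by (try dsimp only); exact arc' _ _ (by omega) (by omega))
    rcases hqt _ _ hp with h | h
    · exact absurd h (L1 a (a+k) (by omega) (by omega))
    · exact h
  have hk0 : A (g k) (g 0) := by have h := f1 0 (by omega); convert h using 2 <;> omega
  have hk1 : A (g (k+1)) (g 1) := by have h := f1 1 (by omega); convert h using 2 <;> omega
  have hk2' : A (g (k+2)) (g 2) := by have h := f1 2 (by omega); convert h using 2 <;> omega
  have f4 : A (g (k+2)) (g 0) := by
    have hp := pathN_idx (A := A) g (k+2) ginj
      (fun i => if i = 0 then k+2 else if i ≤ k-1 then i+1 else 0) (a := k+2) (b := 0) (n := k)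
      (by norm_num) (by (try dsimp only); rw [if_neg (by omega), if_neg (by omega)])
      (fun i hi => by (try dsimp only); split_ifs <;> omega)
      (fun i hi j hj h => by (try dsimp only at h); split_ifs at h <;> omega)
      ?_
    · rcases hqt _ _ hp with h | h
      · exact h
      · exact absurd h (L1 0 (k+2) (by omega) (by omega))
    · intro i hi
      (try dsimp only)
      split_ifs <;>
        first
          | (exact arc' _ _ (by omega) (by omega))
          | (exact False.elim (by assumption))
          | (exfalso; omega)
          | (convert hk2' using 2 <;> omega)
          | (convert hk0 using 2 <;> omega)
  have keybase : A (g (k+1)) (g (k-2)) := by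
    have hp := pathN_idx (A := A) g (k+2) ginj
      (fun i => if i = 0 then k+1 else if i = 1 then k+2 else i-2) (a := k+1) (b := k-2) (n := k)
      (by norm_num) (by (try dsimp only); rw [if_neg (by omega), if_neg (by omega)])
      (fun i hi => by (try dsimp only); split_ifs <;> omega)
      (fun i hi j hj h => by (try dsimp only at h); split_ifs at h <;> omega)
      ?_
    · rcases hqt _ _ hp with h | h
      · exact h
      · exact absurd h (L1 (k-2) (k+1) (by omega) (by omega))
    · intro i hi
      (try dsimp only)
      split_ifs <;>
        first
          | (exact arc' _ _ (by omega) (by omega))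
          | (exact False.elim (by assumption))
          | (exfalso; omega)
          | (convert f4 using 2 <;> omega)
  have step1 : ∀ m : ℕ, 3 ≤ m → m ≤ k → A (g (k+1)) (g m) → A (g (k+1)) (g (m-2)) := by
    intro m hm3 hmk hAm
    have hp := pathN_idx (A := A) g (k+2) ginj
      (fun i => if i = 0 then k+1 else if i ≤ k-m+1 then m+i-1 else i-(k-m+2))
      (a := k+1) (b := m-2) (n := k)
      (by norm_num) (by (try dsimp only); rw [if_neg (by omega), if_neg (by omega)]; omega)
      (fun i hi => by (try dsimp only); split_ifs <;> omega)
      (fun i hi j hj h => by (try dsimp only at h); split_ifs at h <;> omega)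
      ?_
    · rcases hqt _ _ hp with h | h
      · exact h
      · exact absurd h (L1 (m-2) (k+1) (by omega) (by omega))
    · intro i hi
      (try dsimp only)
      split_ifs <;>
        first
          | (exact arc' _ _ (by omega) (by omega))
          | (exact False.elim (by assumption))
          | (exfalso; omega)
          | (convert hAm using 2 <;> omega)
          | (convert hk0 using 2 <;> omega)
  have key : ∀ t : ℕ, 2*t+3 ≤ k → A (g (k+1)) (g (k-2-2*t)) := by
    intro t
    induction t with
    | zero => intro _; convert keybase using 2 <;> omega
    | succ t ih =>
      intro h
      have h1 := ih (by omega)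
      have h2 := step1 (k-2-2*t) (by omega) (by omega) h1
      convert h2 using 2 <;> omega
  have L2 : ∀ w : V, A (g 0) w → w ≠ g 1 → ∀ i ≤ k+2, w ≠ g i := by
    intro w hw0 hw1 i hi hwi
    rcases Nat.lt_or_ge i 2 with h2 | h2
    · interval_cases i
      · rw [hwi] at hw0; exact hloop _ hw0
      · exact hw1 hwi
    · rw [hwi] at hw0; exact L1 0 i (by omega) (by omega) hw0
  -- every out-neighbour of u0 is an out-neighbour of u(k+1)
  have hST : ∀ w : V, A (g 0) w → A (g (k+1)) w := by
    intro w hw0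
    by_cases hw1 : w = g 1
    · rw [hw1]; exact hk1
    have hwf : ∀ i ≤ k+2, w ≠ g i := L2 w hw0 hw1
    set W : ℕ → V := fun i => if i = k+3 then w else g i with hW
    have Winj : ∀ i ≤ k+3, ∀ j ≤ k+3, W i = W j → i = j := by
      intro i hi j hj h
      rw [hW] at h; (try dsimp only at h)
      split_ifs at h with h1 h2 h2
      · omega
      · exact absurd h (hwf _ (by omega))
      · exact absurd h.symm (hwf _ (by omega))
      · exact ginj _ (by omega) _ (by omega) h
    have Wg : ∀ i : ℕ, i ≤ k+2 → W i = g i := by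
      intro i hi; rw [hW]; (try dsimp only); rw [if_neg (by omega)]
    have Ww : W (k+3) = w := by rw [hW]; (try dsimp only); rw [if_pos rfl]
    have Warc' : ∀ x y : ℕ, y = x + 1 → x < k+2 → A (W x) (W y) := by
      intro x y hxy hx
      rw [Wg x (by omega), Wg y (by omega)]
      exact arc' x y hxy hx
    have hWw0 : A (W 0) (W (k+3)) := by rw [Wg 0 (by omega), Ww]; exact hw0
    have hWk0 : A (W k) (W 0) := by rw [Wg k (by omega), Wg 0 (by omega)]; exact hk0
    have hWk1 : A (W (k+1)) (W 1) := by rw [Wg (k+1) (by omega), Wg 1 (by omega)]; exact hk1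
    -- no arc from w back to u_j for 3 ≤ j ≤ k+1
    have L3 : ∀ j : ℕ, 3 ≤ j → j ≤ k+1 → ¬ A w (g j) := by
      intro j hj3 hjk hA
      have hWA : A (W (k+3)) (W j) := by rw [Ww, Wg j (by omega)]; exact hA
      have hp := pathN_idx (A := A) W (k+3) Winj
        (fun i => if i = 0 then 0 else if i = 1 then k+3 else j+i-2)
        (a := 0) (b := k+2) (n := k+4-j)
        (by norm_num) (by (try dsimp only); rw [if_neg (by omega), if_neg (by omega)]; omega)
        (fun i hi => by (try dsimp only); split_ifs <;> omega)
        (fun i hi i' hi' h => by (try dsimp only at h); split_ifs at h <;> omega)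
        ?_
      · rw [Wg 0 (by omega), Wg (k+2) (by omega)] at hp
        have := hshort _ hp
        omega
      · intro i hi
        (try dsimp only)
        split_ifs <;>
          first
            | (exact Warc' _ _ (by omega) (by omega))
            | (exact False.elim (by assumption))
            | (exfalso; omega)
            | (convert hWw0 using 2 <;> omega)
            | (convert hWA using 2 <;> omega)
    -- the length-k path (u_2, …, u_k, u_0, w)
    have hp2 : HasPathN A (g 2) w k := by
      have hp := pathN_idx (A := A) W (k+3) Winj
        (fun i => if i ≤ k-2 then i+2 else if i = k-1 then 0 else k+3)
        (a := 2) (b := k+3) (n := k)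
        (by (try dsimp only); rw [if_pos (Nat.zero_le _)])
        (by (try dsimp only); rw [if_neg (by omega), if_neg (by omega)])
        (fun i hi => by (try dsimp only); split_ifs <;> omega)
        (fun i hi i' hi' h => by (try dsimp only at h); split_ifs at h <;> omega)
        ?_
      · rw [Wg 2 (by omega), Ww] at hp
        exact hp
      · intro i hi
        (try dsimp only)
        split_ifs <;>
          first
            | (exact Warc' _ _ (by omega) (by omega))
            | (exact False.elim (by assumption))
            | (exfalso; omega)
            | (convert hWk0 using 2 <;> omega)
            | (convert hWw0 using 2 <;> omega)
    rcases hqt _ _ hp2 with h2w | hw2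
    · -- A (g 2) w : climb along the cycle
      have stepw : ∀ m : ℕ, 2 ≤ m → m ≤ k-1 → A (g m) w → A (g (m+2)) w := by
        intro m hm2 hmk hgm
        have hWm : A (W m) (W (k+3)) := by rw [Wg m (by omega), Ww]; exact hgm
        have hp := pathN_idx (A := A) W (k+3) Winj
          (fun i => if i ≤ k-m-1 then m+2+i else if i ≤ k-1 then i-(k-m-1) else k+3)
          (a := m+2) (b := k+3) (n := k)
          (by (try dsimp only); rw [if_pos (Nat.zero_le _)])
          (by (try dsimp only); rw [if_neg (by omega), if_neg (by omega)])
          (fun i hi => by (try dsimp only); split_ifs <;> omega)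
          (fun i hi i' hi' h => by (try dsimp only at h); split_ifs at h <;> omega)
          ?_
        · rw [Wg (m+2) (by omega), Ww] at hp
          rcases hqt _ _ hp with h | h
          · exact h
          · exact absurd h (L3 (m+2) (by omega) (by omega))
        · intro i hi
          (try dsimp only)
          split_ifs <;>
            first
              | (exact Warc' _ _ (by omega) (by omega))
              | (exact False.elim (by assumption))
              | (exfalso; omega)
              | (convert hWk1 using 2 <;> omega)
              | (convert hWm using 2 <;> omega)
      have chain : ∀ t : ℕ, 2+2*t ≤ k+1 → A (g (2+2*t)) w := by
        intro t
        induction t with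
        | zero => intro _; convert h2w using 2 <;> omega
        | succ t ih =>
          intro h
          have h1 := ih (by omega)
          have h2 := stepw (2+2*t) (by omega) (by omega) h1
          convert h2 using 2 <;> omega
      have hfin := chain c (by omega)
      convert hfin using 2 <;> omega
    · -- A w (g 2) : the path (w, u_2, …, u_{k+1})
      have hWw2 : A (W (k+3)) (W 2) := by rw [Ww, Wg 2 (by omega)]; exact hw2
      have hp := pathN_idx (A := A) W (k+3) Winj
        (fun i => if i = 0 then k+3 else i+1) (a := k+3) (b := k+1) (n := k)
        (by norm_num) (by (try dsimp only); rw [if_neg (by omega)])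
        (fun i hi => by (try dsimp only); split_ifs <;> omega)
        (fun i hi i' hi' h => by (try dsimp only at h); split_ifs at h <;> omega)
        ?_
      · rw [Ww, Wg (k+1) (by omega)] at hp
        rcases hqt _ _ hp with h | h
        · exact absurd h (L3 (k+1) (by omega) (by omega))
        · exact h
      · intro i hi
        (try dsimp only)
        split_ifs <;>
          first
            | (exact Warc' _ _ (by omega) (by omega))
            | (exact False.elim (by assumption))
            | (exfalso; omega)
            | (convert hWw2 using 2 <;> omega)
  -- counting
  set S : Set V := {u | A (g 0) u} with hS
  set T : Set V := {u | A (g (k+1)) u} with hT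
  set M : Set ℕ := insert (k+2) ((fun j => 3 + 2*j) '' Set.Iio (c-1)) with hM
  set E : Set V := g '' M with hE
  have hMelts : ∀ m ∈ M, 3 ≤ m ∧ m ≤ k+2 := by
    intro m hm
    rw [hM, Set.mem_insert_iff] at hm
    rcases hm with rfl | ⟨j, hj, rfl⟩
    · omega
    · have hj' : j < c - 1 := hj
      (try dsimp only)
      omega
  have hET : E ⊆ T := by
    rw [hE]
    rintro x ⟨m, hm, rfl⟩
    rw [hM, Set.mem_insert_iff] at hm
    rw [hT]
    rcases hm with rfl | ⟨j, hj, rfl⟩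
    · exact arc (k+1) (by omega)
    · have hj' : j < c-1 := hj
      have hkey := key (c-2-j) (by omega)
      have heq : k-2-2*(c-2-j) = 3+2*j := by omega
      rw [heq] at hkey
      exact hkey
  have hSsubT : S ⊆ T := by
    rw [hS, hT]
    intro u hu
    exact hST u hu
  have hdisj : Disjoint S E := by
    rw [Set.disjoint_left, hS, hE]
    rintro x hxS ⟨m, hm, rfl⟩
    have h1 := hMelts m hm
    exact L1 0 m (by omega) (by omega) hxS
  have hMcard : M.ncard = c := by
    rw [hM]
    have hni : (k+2) ∉ ((fun j => 3 + 2*j) '' Set.Iio (c-1)) := by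
      rintro ⟨j, hj, hj2⟩
      have hj' : j < c - 1 := hj
      (try dsimp only at hj2)
      omega
    rw [Set.ncard_insert_of_notMem hni ((Set.finite_Iio _).image _)]
    rw [Set.ncard_image_of_injective _ (fun a b hab => by omega)]
    rw [← Finset.coe_range, Set.ncard_coe_finset, Finset.card_range]
    omega
  have hEcard : E.ncard = c := by
    rw [hE, Set.ncard_image_of_injOn, hMcard]
    intro a ha b hb hab
    exact ginj a (hMelts a ha).2 b (hMelts b hb).2 hab
  have hfinE : E.Finite := by
    rw [hE, hM]
    exact (((Set.finite_Iio _).image _).insert _).image _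
  have hcount : S.ncard + E.ncard ≤ T.ncard := by
    rw [← Set.ncard_union_eq hdisj hfinS hfinE]
    exact Set.ncard_le_ncard (Set.union_subset hSsubT hET) hfinT
  omega

/-- odd `k ≥ 3`; if `(u_0, …, u_{k+2})` is a shortest path (so
`d(u_0, u_{k+2}) = k+2`), then `d⁺(u_{k+1}) ≥ d⁺(u_0) + (k−1)/2`. -/
theorem kqt_odd_degree_jump
    [Fintype V] (A : V → V → Prop) (hloop : ∀ v : V, ¬ A v v)
    (k : ℕ) (hk : 3 ≤ k) (hko : Odd k) (hqt : KQuasiTrans A k)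
    (f : Fin (k + 3) → V) (hinj : Function.Injective f)
    (harc : ∀ i : Fin (k + 2), A (f i.castSucc) (f i.succ))
    (hdist : ddist A (f 0) (f (Fin.last (k + 2))) = ((k : ℕ∞) + 2)) :
    outDeg A (f 0) + (k - 1) / 2 ≤ outDeg A (f ⟨k + 1, by omega⟩) := by
    classical
  obtain ⟨c, hc⟩ := hko
  set g : ℕ → V := fun i => f ⟨i % (k+3), Nat.mod_lt _ (by omega)⟩ with hg
  have ginj : ∀ i ≤ k+2, ∀ j ≤ k+2, g i = g j → i = j := by
    intro i hi j hj h
    have h2 := hinj h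
    have h3 : i % (k+3) = j % (k+3) := congrArg Fin.val h2
    rw [Nat.mod_eq_of_lt (by omega), Nat.mod_eq_of_lt (by omega)] at h3
    exact h3
  have arc : ∀ i < k+2, A (g i) (g (i+1)) := by
    intro i hi
    have e1 : g i = f (Fin.castSucc ⟨i, hi⟩) := by
      rw [hg]; exact congrArg f (Fin.ext (by simp [Nat.mod_eq_of_lt (show i < k+3 by omega)]))
    have e2 : g (i+1) = f (Fin.succ ⟨i, hi⟩) := by
      rw [hg]; exact congrArg f (Fin.ext (by simp [Nat.mod_eq_of_lt (show i+1 < k+3 by omega)]))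
    rw [e1, e2]; exact harc _
  have arc' : ∀ x y : ℕ, y = x + 1 → x < k + 2 → A (g x) (g y) := by
    intro x y h hx; rw [h]; exact arc x hx
  have e0 : g 0 = f 0 := by
    rw [hg]; exact congrArg f (Fin.ext (by simp))
  have elast : g (k+2) = f (Fin.last (k+2)) := by
    rw [hg]; exact congrArg f (Fin.ext (by simp [Fin.last, Nat.mod_eq_of_lt (show k+2 < k+3 by omega)]))
  have hkp1 : g (k+1) = f ⟨k+1, by omega⟩ := by
    rw [hg]; exact congrArg f (Fin.ext (by simp [Nat.mod_eq_of_lt (show k+1 < k+3 by omega)]))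
  have hshort : ∀ m : ℕ, HasPathN A (g 0) (g (k+2)) m → k+2 ≤ m := by
    intro m hm
    by_contra hcon
    have hle : ddist A (f 0) (f (Fin.last (k+2))) ≤ (m : ℕ∞) :=
      sInf_le ⟨m, rfl, by rwa [e0, elast] at hm⟩
    rw [hdist] at hle
    rw [show ((k:ℕ∞)+2) = ((k+2 : ℕ) : ℕ∞) from by push_cast; ring] at hle
    have := (Nat.cast_le (α := ℕ∞)).mp hle
    omega
  have haux := kqt_aux A hloop k c hk hc hqt g ginj arc hshort (Set.toFinite _) (Set.toFinite _)
  have e1 : outDeg A (f 0) = {u : V | A (g 0) u}.ncard := by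
    rw [outDeg, e0]
  have e2 : outDeg A (f ⟨k+1, by omega⟩) = {u : V | A (g (k+1)) u}.ncard := by
    rw [outDeg, hkp1]
  rw [e1, e2]
  omega
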